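/- (Kraft converse) Let A be a finite multiset of positive integers and k ≥ 2 with ∑_{a ∈ A} k^{-a} ≤ 1. Then there exists a prefix-free set C of words over an alphabet of size k such that the multiset of lengths {|c| : c ∈ C} equals A. -/

import Mathlib

def padW (k : ℕ) (hk : 0 < k) : ℕ → ℕ → List (Fin k)
  | 0, _ => []
  | n+1, N => ⟨N / k^n % k, Nat.mod_lt _ hk⟩ :: padW k hk n (N % k^n)

lemma length_padW (k : ℕ) (hk : 0 < k) : ∀ n N, (padW k hk n N).length = n
  | 0, _ => rfl
  | n+1, N => by simp [padW, length_padW k hk n]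

def valW {k : ℕ} : List (Fin k) → ℕ
  | [] => 0
  | d :: w => d.val * k ^ w.length + valW w

lemma valW_lt {k : ℕ} : ∀ w : List (Fin k), valW w < k ^ w.length
  | [] => by simp [valW]
  | d :: w => by
      have h1 := valW_lt w
      have h2 : d.val + 1 ≤ k := d.isLt
      have : d.val * k ^ w.length + valW w < (d.val + 1) * k ^ w.length := by
        nlinarith
      calc valW (d :: w) < (d.val + 1) * k ^ w.length := this
        _ ≤ k * k ^ w.length := by exact Nat.mul_le_mul_right _ h2
        _ = k ^ (d :: w).length := by rw [List.length_cons]; ring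

lemma valW_append {k : ℕ} : ∀ u v : List (Fin k),
    valW (u ++ v) = valW u * k ^ v.length + valW v
  | [], v => by simp [valW]
  | d :: u, v => by
      simp only [List.cons_append, valW, valW_append u v, List.length_append,
        List.append_eq, pow_add]
      ring

lemma valW_padW (k : ℕ) (hk : 0 < k) : ∀ n N, N < k ^ n → valW (padW k hk n N) = N
  | 0, N, h => by
      simp only [pow_zero, Nat.lt_one_iff] at h
      subst h; rfl
  | n+1, N, h => by
      have hm : N % k ^ n < k ^ n := Nat.mod_lt _ (Nat.pow_pos hk)
      have ih := valW_padW k hk n (N % k^n) hm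
      have hdiv : N / k ^ n < k := by
        rw [Nat.div_lt_iff_lt_mul (Nat.pow_pos hk)]
        calc N < k ^ (n+1) := h
          _ = k * k ^ n := by ring
      simp only [padW, valW, length_padW, ih]
      rw [Nat.mod_eq_of_lt hdiv]
      exact Nat.div_add_mod' N (k^n)

theorem stmt_5 (A : Multiset ℕ) (k : ℕ) (hk : 2 ≤ k)
    (hpos : ∀ n ∈ A, 0 < n)
    (hsum : (A.map (fun n => ((k : ℝ) ^ n)⁻¹)).sum ≤ 1) :
    ∃ C : Finset (List (Fin k)),
      (∀ u ∈ C, ∀ v ∈ C, u ≠ v → ¬ u <+: v) ∧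
      C.val.map List.length = A := by
  classical
  have hk0 : 0 < k := by omega
  set l : List ℕ := A.sort (· ≤ ·) with hl
  have hlA : (l : Multiset ℕ) = A := A.sort_eq (· ≤ ·)
  have hsorted : l.Pairwise (· ≤ ·) := A.pairwise_sort (· ≤ ·)
  set L : Fin l.length → ℕ := l.get with hL
  have hmono : ∀ i j : Fin l.length, i ≤ j → L i ≤ L j := fun i j h =>
    hsorted.rel_get_of_le h
  set N : Fin l.length → ℕ := fun i => ∑ j ∈ Finset.Iio i, k ^ (L i - L j) with hN
  set w : Fin l.length → List (Fin k) := fun i => padW k hk0 (L i) (N i) with hw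
  -- total Kraft sum as a Fin sum
  have hsum' : ∑ j : Fin l.length, ((k:ℝ) ^ (L j))⁻¹ ≤ 1 := by
    have heq : (A.map (fun n => ((k : ℝ) ^ n)⁻¹)).sum
        = ∑ j : Fin l.length, ((k:ℝ) ^ (L j))⁻¹ := by
      rw [← hlA, Multiset.map_coe, Multiset.sum_coe]
      conv_lhs => rw [← List.ofFn_get l, List.map_ofFn, List.sum_ofFn]
      rfl
    rwa [heq] at hsum
  -- Claim 1
  have claim1 : ∀ i, N i + 1 ≤ k ^ L i := by
    intro i
    have h0 : ((N i : ℝ)) = ∑ j ∈ Finset.Iio i, (k:ℝ) ^ (L i - L j) := by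
      simp only [hN]; push_cast; rfl
    have hterm : ∀ j ∈ Finset.Iio i,
        ((k:ℝ)) ^ (L i - L j) = (k:ℝ) ^ L i * ((k:ℝ) ^ L j)⁻¹ := by
      intro j hj
      have hle : L j ≤ L i := hmono j i (le_of_lt (Finset.mem_Iio.1 hj))
      have hkne : ((k:ℝ) ^ L j) ≠ 0 := by positivity
      field_simp
      rw [← pow_add, Nat.sub_add_cancel hle]
    have hcast : ((N i : ℝ) + 1)
        = (k:ℝ) ^ (L i) * ∑ j ∈ Finset.Iic i, ((k:ℝ) ^ (L j))⁻¹ := by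
      rw [h0, Finset.sum_congr rfl hterm, ← Finset.mul_sum, ← Finset.Iio_insert,
        Finset.sum_insert (by simp), mul_add,
        mul_inv_cancel₀ (show ((k:ℝ) ^ L i) ≠ 0 by positivity)]
      ring
    have hsub : ∑ j ∈ Finset.Iic i, ((k:ℝ) ^ (L j))⁻¹ ≤ 1 := by
      refine le_trans ?_ hsum'
      apply Finset.sum_le_sum_of_subset_of_nonneg (Finset.subset_univ _)
      intro j _ _
      positivity
    have hfin : ((N i : ℝ) + 1) ≤ (k:ℝ) ^ L i := by
      rw [hcast]
      nlinarith [pow_pos (show (0:ℝ) < k by positivity) (L i)]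
    have : ((N i + 1 : ℕ) : ℝ) ≤ ((k ^ L i : ℕ) : ℝ) := by push_cast; linarith
    exact_mod_cast this
  -- Claim 2
  have claim2 : ∀ i j : Fin l.length, i < j → k ^ (L j - L i) * (N i + 1) ≤ N j := by
    intro i j hij
    have hLij : L i ≤ L j := hmono i j (le_of_lt hij)
    have h1 : ∑ m ∈ Finset.Iic i, k ^ (L j - L m) ≤ N j := by
      simp only [hN]
      apply Finset.sum_le_sum_of_subset
      intro m hm
      exact Finset.mem_Iio.2 (lt_of_le_of_lt (Finset.mem_Iic.1 hm) hij)
    have hterm' : ∀ m ∈ Finset.Iio i,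
        k ^ (L j - L m) = k ^ (L j - L i) * k ^ (L i - L m) := by
      intro m hm
      have hLm : L m ≤ L i := hmono m i (le_of_lt (Finset.mem_Iio.1 hm))
      rw [← pow_add]
      congr 1
      omega
    have h2 : ∑ m ∈ Finset.Iic i, k ^ (L j - L m)
        = k ^ (L j - L i) * (N i + 1) := by
      rw [← Finset.Iio_insert, Finset.sum_insert (by simp)]
      simp only [hN]
      rw [mul_add, mul_one, Finset.mul_sum, Finset.sum_congr rfl hterm']
      ring
    rw [← h2]; exact h1
  -- words have correct values and lengths
  have hNlt : ∀ i, N i < k ^ L i := fun i => Nat.lt_of_succ_le (claim1 i)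
  have hval : ∀ i, valW (w i) = N i := fun i => valW_padW k hk0 _ _ (hNlt i)
  have hlen : ∀ i, (w i).length = L i := fun i => length_padW k hk0 _ _
  -- prefix impossible between distinct indices
  have hpref : ∀ i j : Fin l.length, i ≠ j → ¬ w i <+: w j := by
    intro i j hne hp
    obtain ⟨t, ht⟩ := hp
    have hlt : L i + t.length = L j := by
      have := congrArg List.length ht
      simp only [List.length_append, hlen] at this
      omega
    have hvj : N j = N i * k ^ t.length + valW t := by
      rw [← hval j, ← ht, valW_append, hval]
    rcases lt_trichotomy i j with h | h | h
    · have h2 := claim2 i j h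
      have h3 : L j - L i = t.length := by omega
      have h4 : valW t < k ^ t.length := valW_lt t
      rw [h3] at h2
      nlinarith
    · exact hne h
    · have hLji : L j ≤ L i := hmono j i (le_of_lt h)
      have htnil : t.length = 0 := by omega
      have ht0 : t = [] := List.length_eq_zero_iff.1 htnil
      subst ht0
      simp only [List.length_nil, pow_zero, mul_one, valW] at hvj
      have h2 := claim2 j i h
      have h3 : L i - L j = 0 := by omega
      rw [h3, pow_zero, one_mul] at h2
      omega
  have hinj : Function.Injective w := by
    intro i j hij
    by_contra hne
    exact hpref i j hne (hij ▸ List.prefix_refl _)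
  refine ⟨⟨Multiset.map w Finset.univ.val, Multiset.Nodup.map hinj Finset.univ.nodup⟩, ?_, ?_⟩
  · intro u hu v hv huv
    simp only [Finset.mem_mk, Multiset.mem_map] at hu hv
    obtain ⟨i, _, rfl⟩ := hu
    obtain ⟨j, _, rfl⟩ := hv
    exact hpref i j (fun h => huv (by rw [h]))
  · show (Multiset.map w Finset.univ.val).map List.length = A
    rw [Multiset.map_map]
    have hcomp : (List.length ∘ w) = L := by
      funext i; exact hlen i
    rw [hcomp, ← hlA, hL]
    have huniv : (Finset.univ.val : Multiset (Fin l.length)) = ↑(List.finRange l.length) := rfl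
    rw [huniv, Multiset.map_coe, List.map_get_finRange]
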